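/- Let x : [0, T] → ℝ be a continuously differentiable function that is T-periodic with x(0) = x(T) = 0, x(t) ≥ 0 for all t, and x not identically zero. Suppose ∫₀ᵀ ẋ² dt ≤ ∫₀ᵀ x² dt - α ∫₀ᵀ |x|³ dt - ∫₀ᵀ W(t) x(t) dt, where α ≥ 0 and W(t) ≥ 0. Then T ≥ π. -/

import Mathlib

open intervalIntegral MeasureTheory

/-- A continuous function with a point where it is nonzero has positive integral of its square. -/
lemma sq_integral_pos {T : ℝ} (hT : 0 < T) {x : ℝ → ℝ} (hc : Continuous x)
    {t₀ : ℝ} (ht₀ : t₀ ∈ Set.Icc (0:ℝ) T) (hx0 : x t₀ ≠ 0) :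
    0 < ∫ t in (0:ℝ)..T, (x t)^2 := by
  set f : ℝ → ℝ := fun t => (x t)^2 with hf_def
  have hf : Continuous f := (hc.pow 2)
  have hfnn : ∀ t, 0 ≤ f t := fun t => sq_nonneg _
  have hft₀ : 0 < f t₀ := by
    have := abs_pos.mpr hx0
    have : 0 < |x t₀|^2 := pow_pos this 2
    rwa [sq_abs] at this
  set c : ℝ := f t₀ / 2 with hc_def
  have hcpos : 0 < c := by positivity
  obtain ⟨η, hη, hball⟩ := Metric.continuousAt_iff.mp hf.continuousAt c hcpos
  set a : ℝ := max 0 (t₀ - η/2) with ha_def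
  set b : ℝ := min T (t₀ + η/2) with hb_def
  have ht0 : 0 ≤ t₀ := ht₀.1
  have ht1 : t₀ ≤ T := ht₀.2
  have hab : a < b := by
    apply max_lt
    · exact lt_min hT (by linarith)
    · exact lt_min (by linarith) (by linarith)
  have h0a : 0 ≤ a := le_max_left _ _
  have hbT : b ≤ T := min_le_left _ _
  have hbound : ∀ t ∈ Set.Icc a b, c ≤ f t := by
    intro t ht
    have h1 : t₀ - η/2 ≤ t := le_trans (le_max_right _ _) ht.1
    have h2 : t ≤ t₀ + η/2 := le_trans ht.2 (min_le_right _ _)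
    have hdist : dist t t₀ < η := by
      rw [Real.dist_eq, abs_lt]; constructor <;> linarith
    have := hball hdist
    rw [Real.dist_eq, abs_lt] at this
    linarith [this.1, this.2]
  have hint : ∀ p q : ℝ, IntervalIntegrable f volume p q := fun p q =>
    hf.intervalIntegrable p q
  have hmid : c * (b - a) ≤ ∫ t in a..b, f t := by
    have h1 : ∫ t in a..b, (c : ℝ) ≤ ∫ t in a..b, f t :=
      intervalIntegral.integral_mono_on hab.le (intervalIntegrable_const) (hint a b) hbound
    rwa [intervalIntegral.integral_const, smul_eq_mul, mul_comm] at h1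
  have hsplit1 : (∫ t in (0:ℝ)..a, f t) + (∫ t in a..b, f t) = ∫ t in (0:ℝ)..b, f t :=
    intervalIntegral.integral_add_adjacent_intervals (hint 0 a) (hint a b)
  have hsplit2 : (∫ t in (0:ℝ)..b, f t) + (∫ t in b..T, f t) = ∫ t in (0:ℝ)..T, f t :=
    intervalIntegral.integral_add_adjacent_intervals (hint 0 b) (hint b T)
  have h0a' : 0 ≤ ∫ t in (0:ℝ)..a, f t :=
    intervalIntegral.integral_nonneg h0a (fun u _ => hfnn u)
  have hbT' : 0 ≤ ∫ t in b..T, f t :=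
    intervalIntegral.integral_nonneg hbT (fun u _ => hfnn u)
  have : 0 < c * (b - a) := by
    apply mul_pos hcpos; linarith
  linarith

theorem period_lower_bound (T α : ℝ) (hT : 0 < T) (hα : 0 ≤ α)
    (x W : ℝ → ℝ) (hx : ContDiff ℝ 1 x) (hper : Function.Periodic x T)
    (h0 : x 0 = 0) (hTend : x T = 0)
    (hnonneg : ∀ t ∈ Set.Icc (0:ℝ) T, 0 ≤ x t)
    (hnontriv : ∃ t ∈ Set.Icc (0:ℝ) T, x t ≠ 0)
    (hW : ∀ t ∈ Set.Icc (0:ℝ) T, 0 ≤ W t)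
    (hWcont : Continuous W)
    (hineq : ∫ t in (0:ℝ)..T, (deriv x t)^2
      ≤ (∫ t in (0:ℝ)..T, (x t)^2) - α * (∫ t in (0:ℝ)..T, |x t|^3)
        - ∫ t in (0:ℝ)..T, W t * x t) :
    T ≥ Real.pi := by
  by_contra hcon
  push_neg at hcon
  -- pick k with 1 < k and k * T < π
  set k : ℝ := (T + Real.pi) / (2 * T) with hk_def
  have hπ : 0 < Real.pi := Real.pi_pos
  have hk1 : 1 < k := by
    rw [hk_def, lt_div_iff₀ (by linarith)]; linarith
  have hk0 : 0 < k := by linarith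
  have hkT : k * T < Real.pi := by
    rw [hk_def, div_mul_eq_mul_div, div_lt_iff₀ (by linarith)]; ring_nf; nlinarith
  set δ : ℝ := (Real.pi / k - T) / 2 with hδ_def
  have hδ : 0 < δ := by
    rw [hδ_def]
    have : T < Real.pi / k := by rw [lt_div_iff₀ hk0]; linarith [hkT]
    linarith
  -- the angle θ t = k * (t + δ) lies in (0, π) for t ∈ [0, T]
  have hsinpos : ∀ t ∈ Set.Icc (0:ℝ) T, 0 < Real.sin (k * (t + δ)) := by
    intro t ht
    apply Real.sin_pos_of_pos_of_lt_pi
    · have := ht.1; nlinarith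
    · have h1 : t ≤ T := ht.2
      have : k * (t + δ) ≤ k * (T + δ) := by nlinarith
      have h2 : k * (T + δ) < Real.pi := by
        have : k * δ = (Real.pi - k * T) / 2 := by
          rw [hδ_def]; field_simp
        nlinarith [hkT]
      linarith
  have huIcc : Set.uIcc (0:ℝ) T = Set.Icc 0 T := Set.uIcc_of_le hT.le
  set w : ℝ → ℝ := fun t => k * Real.cos (k * (t + δ)) / Real.sin (k * (t + δ)) with hw_def
  -- derivative of the multiplier
  have hw_deriv : ∀ t ∈ Set.uIcc (0:ℝ) T, HasDerivAt w (-(k^2 + (w t)^2)) t := by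
    intro t ht
    rw [huIcc] at ht
    have hs := hsinpos t ht
    have hsne : Real.sin (k * (t + δ)) ≠ 0 := ne_of_gt hs
    have hθ : HasDerivAt (fun t : ℝ => k * (t + δ)) k t := by
      simpa using ((hasDerivAt_id t).add_const δ).const_mul k
    have hcos : HasDerivAt (fun t : ℝ => Real.cos (k * (t + δ)))
        (-Real.sin (k * (t + δ)) * k) t := (Real.hasDerivAt_cos _).comp t hθ
    have hsin : HasDerivAt (fun t : ℝ => Real.sin (k * (t + δ)))
        (Real.cos (k * (t + δ)) * k) t := (Real.hasDerivAt_sin _).comp t hθ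
    have hnum : HasDerivAt (fun t : ℝ => k * Real.cos (k * (t + δ)))
        (k * (-Real.sin (k * (t + δ)) * k)) t := hcos.const_mul k
    have hdiv := hnum.div hsin hsne
    convert hdiv using 1
    · rfl
    · rfl
    · rfl
    simp only [hw_def]
    have hpy := Real.sin_sq_add_cos_sq (k * (t + δ))
    set s := Real.sin (k * (t + δ))
    set c := Real.cos (k * (t + δ))
    field_simp
    nlinarith [hpy]
  have hw_cont : ContinuousOn w (Set.uIcc (0:ℝ) T) := by
    rw [huIcc]
    apply ContinuousOn.div
    · exact (continuous_const.mul ((Real.continuous_cos.comp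
        (continuous_const.mul (continuous_id.add continuous_const))))).continuousOn
    · exact (Real.continuous_sin.comp
        (continuous_const.mul (continuous_id.add continuous_const))).continuousOn
    · intro t ht; exact ne_of_gt (hsinpos t ht)
  have hxc : Continuous x := hx.continuous
  have hdc : Continuous (deriv x) := hx.continuous_deriv le_rfl
  have hdx : ∀ t, HasDerivAt x (deriv x t) t := fun t =>
    (hx.differentiable one_ne_zero t).hasDerivAt
  -- integration by parts: ∫ (x²)' w = ∫ x² (k² + w²)
  have hu : ∀ t ∈ Set.uIcc (0:ℝ) T, HasDerivAt (fun t => (x t)^2)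
      (2 * x t * deriv x t) t := by
    intro t _
    have := (hdx t).fun_pow 2
    simpa [mul_comm, mul_assoc] using this
  have hu'_int : IntervalIntegrable (fun t => 2 * x t * deriv x t) volume 0 T :=
    ((continuous_const.mul hxc).mul hdc).intervalIntegrable 0 T
  have hv'_int : IntervalIntegrable (fun t => -(k^2 + (w t)^2)) volume 0 T := by
    apply ContinuousOn.intervalIntegrable
    exact ((continuousOn_const.add (hw_cont.pow 2)).neg)
  have parts := intervalIntegral.integral_mul_deriv_eq_deriv_mul hu hw_deriv hu'_int hv'_int
  rw [h0, hTend] at parts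
  simp only [ne_eq, OfNat.ofNat_ne_zero, not_false_eq_true, zero_pow, zero_mul, sub_zero,
    sub_self, zero_sub] at parts
  -- parts : ∫ x² * (-(k² + w²)) = - ∫ (2 x d) * w
  have hIBP : (∫ t in (0:ℝ)..T, (2 * x t * deriv x t) * w t)
      = ∫ t in (0:ℝ)..T, (x t)^2 * (k^2 + (w t)^2) := by
    have h1 : (∫ t in (0:ℝ)..T, (x t)^2 * (-(k^2 + (w t)^2)))
        = - ∫ t in (0:ℝ)..T, (x t)^2 * (k^2 + (w t)^2) := by
      rw [← intervalIntegral.integral_neg]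
      congr 1; funext t; ring
    rw [h1] at parts
    linarith [parts]
  -- integrability of pieces
  have hA_int : IntervalIntegrable (fun t => (deriv x t)^2) volume 0 T :=
    (hdc.pow 2).intervalIntegrable 0 T
  have hB_int : IntervalIntegrable (fun t => (2 * x t * deriv x t) * w t) volume 0 T := by
    apply ContinuousOn.intervalIntegrable
    exact (((continuous_const.mul hxc).mul hdc).continuousOn).mul hw_cont
  have hC_int : IntervalIntegrable (fun t => (x t)^2 * (w t)^2) volume 0 T := by
    apply ContinuousOn.intervalIntegrable
    exact ((hxc.pow 2).continuousOn).mul (hw_cont.pow 2)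
  -- the completed square
  have hE : (0:ℝ) ≤ ∫ t in (0:ℝ)..T, (deriv x t - w t * x t)^2 :=
    intervalIntegral.integral_nonneg hT.le (fun u _ => sq_nonneg _)
  have hexp : (∫ t in (0:ℝ)..T, (deriv x t - w t * x t)^2)
      = (∫ t in (0:ℝ)..T, (deriv x t)^2) - (∫ t in (0:ℝ)..T, (2 * x t * deriv x t) * w t)
        + ∫ t in (0:ℝ)..T, (x t)^2 * (w t)^2 := by
    rw [← intervalIntegral.integral_sub hA_int hB_int,
        ← intervalIntegral.integral_add (hA_int.sub hB_int) hC_int]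
    congr 1; funext t; ring
  -- ∫ x² (k² + w²) = k² ∫ x² + ∫ x² w²
  have hsplitB : (∫ t in (0:ℝ)..T, (x t)^2 * (k^2 + (w t)^2))
      = k^2 * (∫ t in (0:ℝ)..T, (x t)^2) + ∫ t in (0:ℝ)..T, (x t)^2 * (w t)^2 := by
    have h1 : (fun t => (x t)^2 * (k^2 + (w t)^2))
        = fun t => k^2 * (x t)^2 + (x t)^2 * (w t)^2 := by funext t; ring
    rw [h1, intervalIntegral.integral_add
        ((show Continuous (fun t => k^2 * (x t)^2) from (continuous_const.mul (hxc.pow 2))).intervalIntegrable 0 T) hC_int,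
      intervalIntegral.integral_const_mul]
  -- nonnegative correction terms
  have hI3 : 0 ≤ ∫ t in (0:ℝ)..T, |x t|^3 :=
    intervalIntegral.integral_nonneg hT.le (fun u _ => by positivity)
  have hIW : 0 ≤ ∫ t in (0:ℝ)..T, W t * x t :=
    intervalIntegral.integral_nonneg hT.le (fun u hu => mul_nonneg (hW u hu) (hnonneg u hu))
  -- positivity of ∫ x²
  obtain ⟨t₀, ht₀, hxt₀⟩ := hnontriv
  have hpos : 0 < ∫ t in (0:ℝ)..T, (x t)^2 := sq_integral_pos hT hxc ht₀ hxt₀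
  -- conclude
  have hfinal : (0:ℝ) ≤ (∫ t in (0:ℝ)..T, (deriv x t)^2) - k^2 * ∫ t in (0:ℝ)..T, (x t)^2 := by
    rw [hIBP, hsplitB] at hexp
    linarith [hE, hexp]
  have hk2 : 1 < k^2 := by nlinarith
  have hle : k^2 * (∫ t in (0:ℝ)..T, (x t)^2) ≤ ∫ t in (0:ℝ)..T, (x t)^2 := by
    have := mul_nonneg hα hI3
    linarith [hineq, hfinal]
  nlinarith [hpos, hk2, hle]
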